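/- Let F be a field of characteristic ≠ 2 and U an n×n strictly lower triangular matrix over F such that A(U) ≅ A(0_n) via a degree-preserving isomorphism. Then U can be transformed into the zero matrix 0_n by a finite sequence of well-defined elementary triangular operations of type Q; that is, U ≈ 0_n under ETO-equivalence. -/

import Mathlib

open scoped BigOperators

noncomputable section

variable {F : Type} [Field F]

/-- `T` is strictly lower triangular. -/
def SLT {n : ℕ} (T : Matrix (Fin n) (Fin n) F) : Prop :=
  ∀ i j : Fin n, i ≤ j → T i j = 0

/-- The ideal of relations defining the nil graded algebra `A(T)`:
`X i ^ 2 = ∑ j < i, T i j * X j * X i` (for `i = 0` the sum is empty, giving `X 0 ^ 2 = 0`). -/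
def ntIdeal {n : ℕ} (T : Matrix (Fin n) (Fin n) F) : Ideal (MvPolynomial (Fin n) F) :=
  Ideal.span {p | ∃ i : Fin n,
    p = MvPolynomial.X i ^ 2 -
      ∑ j ∈ Finset.univ.filter (fun j => j < i),
        MvPolynomial.C (T i j) * MvPolynomial.X j * MvPolynomial.X i}

/-- The nil graded algebra `A(T)` associated to the strictly lower triangular matrix `T`. -/
abbrev NTAlg {n : ℕ} (T : Matrix (Fin n) (Fin n) F) : Type :=
  MvPolynomial (Fin n) F ⧸ ntIdeal T

/-- The generator `X i` of `A(T)`. -/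
def ntGen {n : ℕ} (T : Matrix (Fin n) (Fin n) F) (i : Fin n) : NTAlg T :=
  Ideal.Quotient.mk (ntIdeal T) (MvPolynomial.X i)

/-- There is a degree-preserving isomorphism `A(T) → A(S)`, i.e. an algebra isomorphism
sending each generator to an `F`-linear combination of the generators of the target. -/
def NTIso {n : ℕ} (T S : Matrix (Fin n) (Fin n) F) : Prop :=
  ∃ e : NTAlg T ≃ₐ[F] NTAlg S, ∃ Γ : Matrix (Fin n) (Fin n) F,
    ∀ j : Fin n, e (ntGen T j) = ∑ i : Fin n, Γ i j • ntGen S i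

/-- Elementary triangular operation `P_{r₁}(·, α)`. -/
def ETOP {n : ℕ} (T S : Matrix (Fin n) (Fin n) F) : Prop :=
  ∃ (r₁ : Fin n) (α : F), α ≠ 0 ∧
    ∀ r k : Fin n, S r k =
      if r = r₁ then T r k / α else if k = r₁ then α * T r k else T r k

/-- Elementary triangular operation `F_{(r₁,r₂)}` (with its well-definedness restrictions). -/
def ETOF {n : ℕ} (T S : Matrix (Fin n) (Fin n) F) : Prop :=
  ∃ r₁ r₂ : Fin n, r₁ < r₂ ∧
    (∀ j : Fin n, r₁ ≤ j → T r₂ j = 0) ∧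
    (∀ r : Fin n, r₁ < r → r < r₂ → T r r₁ = 0) ∧
    ∀ r k : Fin n, S r k = T (Equiv.swap r₁ r₂ r) (Equiv.swap r₁ r₂ k)

/-- Elementary triangular operation `Q_{(r₀,k₀)}(·, β)` (with its well-definedness restrictions). -/
def ETOQ {n : ℕ} (T S : Matrix (Fin n) (Fin n) F) : Prop :=
  ∃ (k₀ r₀ : Fin n) (β : F), k₀ < r₀ ∧
    (∀ j : Fin n, k₀ < j → T r₀ j = 0) ∧
    (k₀.val = 0 ∨ (0 < k₀.val ∧
      ∀ i : Fin n, i < k₀ → T r₀ i + T r₀ k₀ * T k₀ i = β * T k₀ i)) ∧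
    ∀ r k : Fin n, S r k =
      if r = r₀ ∧ k = k₀ then T r₀ k₀ - 2 * β
      else if r₀ < r ∧ k = k₀ then T r k₀ + β * T r r₀
      else T r k

set_option synthInstance.maxHeartbeats 1000000
set_option maxHeartbeats 2000000
attribute [local instance] Classical.propDecidable

def Wit {n : ℕ} (U : Matrix (Fin n) (Fin n) F) : Prop :=
  ∃ v : Fin n → Fin n → F,
    (∀ c : Fin n → F, ∑ i, c i • v i = 0 → ∀ i, c i = 0) ∧
    ∀ i r s : Fin n, r ≠ s → 2 * v i r * v i s =
      ∑ j ∈ Finset.univ.filter (fun j => j < i),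
        U i j * (v j r * v i s + v j s * v i r)

open TrivSqZeroExt MvPolynomial

abbrev DD (F : Type) [Field F] := TrivSqZeroExt F F
abbrev EE (F : Type) [Field F] := TrivSqZeroExt (DD F) (DD F)
def eps : EE F := inl (inr 1)
def del : EE F := inr 1
def CF : F →+* EE F := algebraMap F (EE F)

lemma eps_sq : (eps : EE F) * eps = 0 := by simp [eps, ← inl_mul, inr_mul_inr]
lemma del_sq : (del : EE F) * del = 0 := by simp [del, inr_mul_inr]
lemma eps_mul_del : (eps : EE F) * del = inr (inr 1) := by
  rw [eps, del, inl_mul_inr]; rw [smul_eq_mul, mul_one]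
lemma CF_mul_inr (c d : F) : (CF c : EE F) * inr (inr d) = inr (inr (c * d)) := by
  rw [CF, algebraMap_eq_inl', inl_mul_inr]
  have : (algebraMap F (DD F) c) • (inr (d:F) : DD F) = inr (c * d) := by
    rw [smul_eq_mul, algebraMap_eq_inl, inl_mul_inr, smul_eq_mul]
  rw [this]
lemma inr_inr_injF (c c' : F) (h : (inr (inr c) : EE F) = inr (inr c')) : c = c' := by
  have := congrArg snd h
  rw [snd_inr, snd_inr] at this
  have := congrArg snd this
  rwa [snd_inr, snd_inr] at this
lemma smul_EE (c : F) (x : EE F) : c • x = CF c * x := Algebra.smul_def c x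

lemma prodEE (a b a' b' : F) :
    ((CF a : EE F) * eps + CF b * del) * (CF a' * eps + CF b' * del)
      = (inr (inr (a * b' + b * a')) : EE F) := by
  have h : ∀ A B A' B' : EE F, (A*eps+B*del)*(A'*eps+B'*del)
      = (A*B'+B*A')*(eps*del) + (A*A')*(eps*eps) + (B*B')*(del*del) := by intros; ring
  rw [h, eps_sq, del_sq, eps_mul_del, mul_zero, mul_zero, add_zero, add_zero,
    ← map_mul, ← map_mul, ← map_add, CF_mul_inr, mul_one]

variable {n : ℕ}

/-- the evaluation points for the pair `(r,s)` -/
def pt (F : Type) [Field F] {n : ℕ} (r s : Fin n) : Fin n → EE F :=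
  fun t => if t = r then eps else if t = s then del else 0

lemma pt_sq (r s t : Fin n) : (pt F r s t : EE F) * pt F r s t = 0 := by
  unfold pt; split_ifs
  · exact eps_sq
  · exact del_sq
  · exact mul_zero 0

lemma pt_kill (r s : Fin n) :
    ∀ p ∈ ntIdeal (0 : Matrix (Fin n) (Fin n) F), aeval (pt F r s) p = 0 := by
  intro p hp
  have : ntIdeal (0 : Matrix (Fin n) (Fin n) F) ≤
      RingHom.ker (aeval (pt F r s) : MvPolynomial (Fin n) F →ₐ[F] EE F).toRingHom := by
    rw [ntIdeal, Ideal.span_le]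
    rintro q ⟨i, rfl⟩
    simp only [SetLike.mem_coe, RingHom.mem_ker, AlgHom.toRingHom_eq_coe, RingHom.coe_coe,
      map_sub, map_pow, map_sum, map_mul, aeval_X, aeval_C, Matrix.zero_apply, map_zero,
      zero_mul, Finset.sum_const_zero, sub_zero, pow_two]
    exact pt_sq r s i
  exact this hp

def psiRS (r s : Fin n) : NTAlg (0 : Matrix (Fin n) (Fin n) F) →ₐ[F] EE F :=
  Ideal.Quotient.liftₐ _ (aeval (pt F r s)) (pt_kill r s)

def pt0 : Fin n → TrivSqZeroExt F (Fin n → F) := fun t => inr (Pi.single t 1)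

lemma pt0_kill (U : Matrix (Fin n) (Fin n) F) :
    ∀ p ∈ ntIdeal U, aeval (pt0 : Fin n → TrivSqZeroExt F (Fin n → F)) p = 0 := by
  intro p hp
  have : ntIdeal U ≤
      RingHom.ker (aeval pt0 : MvPolynomial (Fin n) F →ₐ[F] TrivSqZeroExt F (Fin n → F)).toRingHom := by
    rw [ntIdeal, Ideal.span_le]
    rintro q ⟨i, rfl⟩
    simp only [SetLike.mem_coe, RingHom.mem_ker, AlgHom.toRingHom_eq_coe, RingHom.coe_coe,
      map_sub, map_pow, map_sum, map_mul, aeval_X, aeval_C, pow_two, pt0, inr_mul_inr,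
      mul_zero, Finset.sum_const_zero, sub_zero, mul_assoc]
  exact this hp

def psi0 (U : Matrix (Fin n) (Fin n) F) : NTAlg U →ₐ[F] TrivSqZeroExt F (Fin n → F) :=
  Ideal.Quotient.liftₐ _ (aeval pt0) (pt0_kill U)

lemma sum_pair_ite {M : Type} [AddCommMonoid M] (r s : Fin n) (hrs : r ≠ s) (f h : Fin n → M) :
    ∑ t, (if t = r then f t else if t = s then h t else 0) = f r + h s := by
  have : ∀ t ∈ Finset.univ, (if t = r then f t else if t = s then h t else 0)
      = (if t = r then f t else 0) + (if t = s then h t else 0) := by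
    intro t _
    by_cases h1 : t = r
    · subst h1; simp [hrs]
    · by_cases h2 : t = s
      · subst h2; simp [h1, Ne.symm hrs]
      · simp [h1, h2]
  rw [Finset.sum_congr rfl this, Finset.sum_add_distrib,
    Finset.sum_ite_eq' Finset.univ r f, Finset.sum_ite_eq' Finset.univ s h]
  simp

lemma wit_of_iso (U : Matrix (Fin n) (Fin n) F) (hiso : NTIso U (0 : Matrix (Fin n) (Fin n) F)) :
    Wit U := by
  obtain ⟨e, Γ, hΓ⟩ := hiso
  refine ⟨fun i r => Γ r i, ?_, ?_⟩
  · -- independence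
    intro c hc
    have hgen : (∑ i, c i • ntGen U i) = 0 := by
      apply e.injective
      rw [map_sum, map_zero]
      have : ∀ i : Fin n, e (c i • ntGen U i) = ∑ t, (c i * Γ t i) • ntGen 0 t := by
        intro i
        rw [map_smul, hΓ i, Finset.smul_sum]
        exact Finset.sum_congr rfl fun t _ => (smul_smul _ _ _)
      rw [Finset.sum_congr rfl fun i _ => this i, Finset.sum_comm]
      have hz : ∀ t : Fin n, ∑ i, (c i * Γ t i) • ntGen (0 : Matrix (Fin n) (Fin n) F) t = 0 := by
        intro t
        rw [← Finset.sum_smul]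
        have : ∑ i, c i * Γ t i = 0 := by
          have := congrFun hc t
          simpa [Finset.sum_apply] using this
        rw [this, zero_smul]
      exact Finset.sum_eq_zero fun t _ => hz t
    intro i
    have h0 : psi0 U (∑ j, c j • ntGen U j) = 0 := by rw [hgen, map_zero]
    have h1 : psi0 U (∑ j, c j • ntGen U j) = inr c := by
      have hg : ∀ j : Fin n, psi0 U (ntGen U j) = inr (Pi.single j 1) := by
        intro j
        rw [ntGen, psi0, Ideal.Quotient.liftₐ_apply]
        exact aeval_X _ j
      rw [map_sum]
      have : ∀ j : Fin n, psi0 U (c j • ntGen U j) = inr (Pi.single j (c j)) := by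
        intro j
        rw [map_smul, hg j, ← inr_smul]
        congr 1
        ext t
        simp [Pi.single_apply, mul_comm]
      rw [Finset.sum_congr rfl fun j _ => this j, ← inr_sum]
      congr 1
      ext t
      simp [Finset.sum_apply, Pi.single_apply]
    rw [h0] at h1
    have := congrArg snd h1.symm
    rw [snd_inr, snd_zero] at this
    exact congrFun this i
  · -- the quadratic relations
    intro i r s hrs
    -- χ : MvPolynomial → EE F
    set χ : MvPolynomial (Fin n) F →ₐ[F] EE F :=
      (psiRS r s).comp (e.toAlgHom.comp (Ideal.Quotient.mkₐ F (ntIdeal U))) with hχ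
    have hkill : χ (X i ^ 2 -
        ∑ j ∈ Finset.univ.filter (fun j => j < i), C (U i j) * X j * X i) = 0 := by
      rw [hχ]
      simp only [AlgHom.comp_apply]
      have : Ideal.Quotient.mkₐ F (ntIdeal U) (X i ^ 2 -
          ∑ j ∈ Finset.univ.filter (fun j => j < i), C (U i j) * X j * X i) = 0 := by
        rw [Ideal.Quotient.mkₐ_eq_mk, Ideal.Quotient.eq_zero_iff_mem]
        exact Ideal.subset_span ⟨i, rfl⟩
      rw [this, map_zero, map_zero]
    have hX : ∀ j : Fin n, χ (X j) = CF (Γ r j) * eps + CF (Γ s j) * del := by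
      intro j
      rw [hχ]
      simp only [AlgHom.comp_apply, Ideal.Quotient.mkₐ_eq_mk]
      show psiRS r s (e (Ideal.Quotient.mk (ntIdeal U) (X j))) = _
      have : e (Ideal.Quotient.mk (ntIdeal U) (X j)) = ∑ t, Γ t j • ntGen 0 t := hΓ j
      rw [this, map_sum]
      have hgt : ∀ t : Fin n, psiRS r s (Γ t j • ntGen (0:Matrix (Fin n) (Fin n) F) t)
          = Γ t j • pt F r s t := by
        intro t
        rw [map_smul, ntGen, psiRS, Ideal.Quotient.liftₐ_apply]
        congr 1
        exact aeval_X _ t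
      rw [Finset.sum_congr rfl fun t _ => hgt t]
      have hsplit : ∀ t : Fin n, Γ t j • (pt F r s t : EE F)
          = (if t = r then Γ t j • eps else if t = s then Γ t j • del else 0) := by
        intro t
        unfold pt
        split_ifs <;> simp
      rw [Finset.sum_congr rfl fun t _ => hsplit t,
        sum_pair_ite r s hrs (fun t => Γ t j • eps) (fun t => Γ t j • del)]
      rw [smul_EE, smul_EE]
    -- expand hkill
    rw [map_sub, map_pow, map_sum] at hkill
    have hterm : ∀ j : Fin n, χ (C (U i j) * X j * X i)
        = CF (U i j) * (inr (inr (Γ r j * Γ s i + Γ s j * Γ r i)) : EE F) := by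
      intro j
      have hC : χ (C (U i j)) = CF (U i j) := by
        rw [show (C (U i j) : MvPolynomial (Fin n) F) = algebraMap F _ (U i j) from rfl]
        exact χ.commutes (U i j)
      rw [map_mul, map_mul, hC, hX j, hX i, mul_assoc, prodEE, CF_mul_inr]
    have hsq : χ (X i) ^ 2 = (inr (inr (Γ r i * Γ s i + Γ s i * Γ r i)) : EE F) := by
      rw [pow_two, hX i, prodEE]
    rw [hsq, Finset.sum_congr rfl (fun j _ => hterm j)] at hkill
    have : ∀ j ∈ Finset.univ.filter (fun j => j < i),
        CF (U i j) * (inr (inr (Γ r j * Γ s i + Γ s j * Γ r i)) : EE F)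
          = inr (inr (U i j * (Γ r j * Γ s i + Γ s j * Γ r i))) := fun j _ => CF_mul_inr _ _
    rw [Finset.sum_congr rfl this, ← inr_sum, ← inr_sum, sub_eq_zero] at hkill
    have := inr_inr_injF _ _ hkill
    rw [show Γ r i * Γ s i + Γ s i * Γ r i = 2 * Γ r i * Γ s i by ring] at this
    exact this


lemma sum_pair_ite' {n : ℕ} {M : Type} [AddCommMonoid M] (r s : Fin n) (hrs : r ≠ s)
    (f h : Fin n → M) :
    ∑ t, (if t = r then f t else if t = s then h t else 0) = f r + h s := by
  have key : ∀ t ∈ Finset.univ, (if t = r then f t else if t = s then h t else 0)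
      = (if t = r then f t else 0) + (if t = s then h t else 0) := by
    intro t _
    by_cases h1 : t = r
    · subst h1; simp [hrs]
    · by_cases h2 : t = s
      · subst h2; simp [h1, Ne.symm hrs]
      · simp [h1, h2]
  rw [Finset.sum_congr rfl key, Finset.sum_add_distrib,
    Finset.sum_ite_eq' Finset.univ r f, Finset.sum_ite_eq' Finset.univ s h]
  simp

lemma wit_reduce {n : ℕ} (h2 : (2 : F) ≠ 0) :
    ∀ m : ℕ, ∀ U : Matrix (Fin n) (Fin n) F, SLT U → Wit U →
      (Finset.univ.filter (fun i => ∃ l, U i l ≠ 0)).card ≤ m →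
      Relation.ReflTransGen (fun A B : Matrix (Fin n) (Fin n) F => ETOQ A B)
        U (0 : Matrix (Fin n) (Fin n) F) := by
  intro m
  induction m with
  | zero =>
    intro U hU hW hcard
    have hzero : U = 0 := by
      ext i j
      by_contra h
      have hi : i ∈ Finset.univ.filter (fun i => ∃ l, U i l ≠ 0) :=
        Finset.mem_filter.mpr ⟨Finset.mem_univ i, ⟨j, h⟩⟩
      have := Finset.card_pos.mpr ⟨i, hi⟩
      omega
    rw [hzero]
  | succ m ih =>
    intro U hU hW hcard
    obtain ⟨v, hind, hstar⟩ := hW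
    by_cases hne : (Finset.univ.filter (fun i => ∃ l, U i l ≠ 0)).Nonempty
    case neg =>
      have hzero : U = 0 := by
        ext i j
        by_contra h
        exact hne ⟨i, Finset.mem_filter.mpr ⟨Finset.mem_univ i, ⟨j, h⟩⟩⟩
      rw [hzero]
    set Sf := Finset.univ.filter (fun i => ∃ l, U i l ≠ 0) with hSf
    set i₀ := Sf.min' hne with hi₀
    have hi₀mem : i₀ ∈ Sf := Finset.min'_mem _ _
    have hrow0 : ∀ j : Fin n, j < i₀ → ∀ l, U j l = 0 := by
      intro j hj l
      by_contra h
      have : j ∈ Sf := Finset.mem_filter.mpr ⟨Finset.mem_univ j, ⟨l, h⟩⟩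
      exact absurd (Finset.min'_le _ _ this) (not_le.mpr hj)
    have hvnz : ∀ i : Fin n, ∃ t, v i t ≠ 0 := by
      intro i
      by_contra h
      push_neg at h
      have hsum : ∑ j, (Pi.single i (1 : F) : Fin n → F) j • v j = 0 := by
        rw [Finset.sum_eq_single i]
        · funext t; simp [h t]
        · intro b _ hb; simp [Pi.single_eq_of_ne hb]
        · intro hb; exact absurd (Finset.mem_univ i) hb
      have := hind _ hsum i
      simp at this
    have hsingle : ∀ j, j < i₀ → ∀ t t', t ≠ t' → v j t * v j t' = 0 := by
      intro j hj t t' htt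
      have h1 := hstar j t t' htt
      have h0 : ∑ l ∈ Finset.univ.filter (fun l => l < j),
          U j l * (v l t * v j t' + v l t' * v j t) = 0 :=
        Finset.sum_eq_zero fun l _ => by rw [hrow0 j hj l, zero_mul]
      rw [h0, mul_assoc] at h1
      rcases mul_eq_zero.mp h1 with h | h
      · exact absurd h h2
      · exact h
    have hinj : ∀ j j', j < i₀ → j' < i₀ → ∀ t, v j t ≠ 0 → v j' t ≠ 0 → j = j' := by
      intro j j' hj hj' t hjt hj't
      by_contra hne'
      have hsum : ∑ a, (if a = j then v j' t else if a = j' then -(v j t) else 0) • v a = 0 := by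
        have hh := sum_pair_ite' j j' hne' (fun a => (v j' t) • v a) (fun a => (-(v j t)) • v a)
        rw [show (∑ a, (if a = j then v j' t else if a = j' then -(v j t) else 0) • v a)
            = ∑ a, (if a = j then (v j' t) • v a else if a = j' then (-(v j t)) • v a else 0) by
          apply Finset.sum_congr rfl; intro a _; split_ifs <;> simp, hh]
        funext t'
        simp only [Pi.add_apply, Pi.smul_apply, smul_eq_mul, Pi.zero_apply]
        by_cases ht' : t' = t
        · subst ht'; ring
        · have e1 : v j t' = 0 :=
            (mul_eq_zero.mp (hsingle j hj t t' (fun hh => ht' hh.symm))).resolve_left hjt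
          have e2 : v j' t' = 0 :=
            (mul_eq_zero.mp (hsingle j' hj' t t' (fun hh => ht' hh.symm))).resolve_left hj't
          rw [e1, e2]; ring
      have := hind _ hsum j
      simp at this
      exact hj't this
    set d : Fin n → F := fun t => ∑ l ∈ Finset.univ.filter (fun l => l < i₀), U i₀ l * v l t
      with hd
    set w : Fin n → F := v i₀ with hw
    have hstar0 : ∀ r s : Fin n, r ≠ s → 2 * w r * w s = d r * w s + d s * w r := by
      intro r s hrs
      rw [hstar i₀ r s hrs]
      rw [show d r = ∑ l ∈ Finset.univ.filter (fun l => l < i₀), U i₀ l * v l r from rfl,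
        show d s = ∑ l ∈ Finset.univ.filter (fun l => l < i₀), U i₀ l * v l s from rfl]
      rw [Finset.sum_mul, Finset.sum_mul, ← Finset.sum_add_distrib]
      apply Finset.sum_congr rfl
      intro l _
      ring
    have hdcoord : ∀ l, l < i₀ → ∀ t, v l t ≠ 0 → d t = U i₀ l * v l t := by
      intro l hl t hlt
      rw [show d t = ∑ a ∈ Finset.univ.filter (fun a => a < i₀), U i₀ a * v a t from rfl]
      rw [Finset.sum_eq_single l]
      · intro b hb hbl
        have hb' : b < i₀ := (Finset.mem_filter.mp hb).2
        have : v b t = 0 := by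
          by_contra hbt
          exact hbl (hinj b l hb' hl t hbt hlt)
        rw [this, mul_zero]
      · intro hl'
        exact absurd hl (by simpa using hl')
    obtain ⟨k, huk⟩ : ∃ l, U i₀ l ≠ 0 := (Finset.mem_filter.mp hi₀mem).2
    have hki : k < i₀ := by
      by_contra h
      exact huk (hU i₀ k (not_lt.mp h))
    obtain ⟨r, hvkr⟩ := hvnz k
    have hks : ∀ t, t ≠ r → v k t = 0 := fun t ht =>
      (mul_eq_zero.mp (hsingle k hki r t (fun hh => ht hh.symm))).resolve_left hvkr
    have hdr : d r = U i₀ k * v k r := hdcoord k hki r hvkr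
    have hdrne : d r ≠ 0 := by rw [hdr]; exact mul_ne_zero huk hvkr
    have hw_of_d : ∀ t, d t ≠ 0 → w t ≠ 0 := by
      intro t hdt hwt
      have hall : ∀ t', w t' = 0 := by
        intro t'
        by_cases ht' : t' = t
        · rw [ht']; exact hwt
        · have h5 := hstar0 t t' (fun hh => ht' hh.symm)
          rw [hwt] at h5
          have h6 : d t * w t' = 0 := by linear_combination -h5
          exact (mul_eq_zero.mp h6).resolve_left hdt
      obtain ⟨t'', ht''⟩ := hvnz i₀
      exact ht'' (hall t'')
    have hwr : w r ≠ 0 := hw_of_d r hdrne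
    have hcomb : ∀ b : Fin n → F,
        (∀ t, w t = ∑ l ∈ Finset.univ.filter (fun l => l < i₀), b l * v l t) → False := by
      intro b hb
      have hsum : ∑ a, (if a < i₀ then b a else if a = i₀ then (-1 : F) else 0) • v a = 0 := by
        funext t
        simp only [Finset.sum_apply, Pi.smul_apply, smul_eq_mul, Pi.zero_apply]
        rw [← Finset.sum_filter_add_sum_filter_not Finset.univ (fun a => a < i₀)]
        have e1 : ∑ a ∈ Finset.univ.filter (fun a => a < i₀),
            (if a < i₀ then b a else if a = i₀ then (-1:F) else 0) * v a t
            = ∑ a ∈ Finset.univ.filter (fun a => a < i₀), b a * v a t := by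
          apply Finset.sum_congr rfl
          intro a ha
          rw [if_pos (Finset.mem_filter.mp ha).2]
        have e2 : ∑ a ∈ Finset.univ.filter (fun a => ¬ a < i₀),
            (if a < i₀ then b a else if a = i₀ then (-1:F) else 0) * v a t
            = -(w t) := by
          rw [Finset.sum_eq_single i₀]
          · rw [if_neg (lt_irrefl i₀), if_pos rfl, hw]; ring
          · intro a ha hane
            rw [if_neg (Finset.mem_filter.mp ha).2, if_neg hane, zero_mul]
          · intro hmem
            exact absurd (Finset.mem_filter.mpr ⟨Finset.mem_univ i₀, lt_irrefl i₀⟩) hmem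
        rw [e1, e2, ← hb t]
        ring
      have := hind _ hsum i₀
      rw [if_neg (lt_irrefl i₀), if_pos rfl] at this
      exact absurd this (by norm_num)
    obtain ⟨s, hsr, hws⟩ : ∃ s, s ≠ r ∧ w s ≠ 0 := by
      by_contra h
      push_neg at h
      apply hcomb (fun l => if l = k then w r / v k r else 0)
      intro t
      rw [Finset.sum_eq_single k]
      · rw [if_pos rfl]
        by_cases ht : t = r
        · subst ht; rw [div_mul_cancel₀ _ hvkr]
        · rw [hks t ht, mul_zero]
          exact h t ht
      · intro b _ hbk; rw [if_neg hbk, zero_mul]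
      · intro hmem
        exact absurd hki (by simpa using hmem)
    have hsupp : ∀ t, t ≠ r → t ≠ s → w t = 0 := by
      intro t htr hts
      by_contra hwt
      have e1 := hstar0 r s (fun hh => hsr hh.symm)
      have e2 := hstar0 r t (fun hh => htr hh.symm)
      have e3 := hstar0 s t (fun hh => hts hh.symm)
      have hdrw : d r = w r := by
        have key : (2 * w s * w t) * (w r - d r) = 0 := by
          linear_combination (w t) * e1 + (w s) * e2 - (w r) * e3
        have hnz : (2 : F) * w s * w t ≠ 0 := mul_ne_zero (mul_ne_zero h2 hws) hwt
        have := (mul_eq_zero.mp key).resolve_left hnz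
        linear_combination -this
      have hdm : ∀ a, a ≠ r → d a = w a := by
        intro a ha
        have e4 := hstar0 r a (fun hh => ha hh.symm)
        rw [hdrw] at e4
        have key : w r * (w a - d a) = 0 := by linear_combination e4
        have := (mul_eq_zero.mp key).resolve_left hwr
        linear_combination -this
      apply hcomb (fun l => U i₀ l)
      intro t'
      by_cases ht' : t' = r
      · subst ht'; rw [← hdrw]
      · rw [← hdm t' ht']
    have honly : ∀ l, l < i₀ → l ≠ k → U i₀ l = 0 := by
      intro l hl hlk
      by_contra hul
      obtain ⟨r', hvlr'⟩ := hvnz l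
      have hdr' : d r' ≠ 0 := by
        rw [hdcoord l hl r' hvlr']
        exact mul_ne_zero hul hvlr'
      have hwr' : w r' ≠ 0 := hw_of_d r' hdr'
      have hr'r : r' ≠ r := by
        intro hh
        subst hh
        exact hlk (hinj l k hl hki r' hvlr' hvkr)
      have hr's : r' = s := by
        by_contra hh
        exact hwr' (hsupp r' hr'r hh)
      have hls : ∀ t, t ≠ r' → v l t = 0 := fun t ht =>
        (mul_eq_zero.mp (hsingle l hl r' t (fun hh => ht hh.symm))).resolve_left hvlr'
      apply hcomb (fun a => if a = k then w r / v k r else if a = l then w r' / v l r' else 0)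
      intro t
      have hkl : k ≠ l := fun hh => hlk hh.symm
      have hsub : ({k, l} : Finset (Fin n)) ⊆ Finset.univ.filter (fun a => a < i₀) := by
        intro x hx
        rcases Finset.mem_insert.mp hx with h | h
        · subst h; exact Finset.mem_filter.mpr ⟨Finset.mem_univ _, hki⟩
        · rw [Finset.mem_singleton.mp h]; exact Finset.mem_filter.mpr ⟨Finset.mem_univ _, hl⟩
      rw [← Finset.sum_subset hsub]
      · rw [Finset.sum_pair hkl, if_pos rfl, if_neg hkl.symm, if_pos rfl]
        by_cases htr : t = r
        · rw [htr, div_mul_cancel₀ _ hvkr, hls r (fun hh => hr'r hh.symm), mul_zero, add_zero]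
        · by_cases htr' : t = r'
          · rw [htr', div_mul_cancel₀ _ hvlr', hks r' hr'r, mul_zero, zero_add]
          · rw [hks t htr, hls t htr', mul_zero, mul_zero, add_zero]
            rw [hr's] at htr'
            exact hsupp t htr htr'
      · intro x hx hxn
        have hxk : x ≠ k := fun hh => hxn (by rw [hh]; exact Finset.mem_insert_self _ _)
        have hxl : x ≠ l := fun hh =>
          hxn (by rw [hh]; exact Finset.mem_insert_of_mem (Finset.mem_singleton_self _))
        rw [if_neg hxk, if_neg hxl, zero_mul]
    -- now : row i₀ has a single nonzero entry, at column k
    have hdt : ∀ t, d t = U i₀ k * v k t := by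
      intro t
      rw [show d t = ∑ a ∈ Finset.univ.filter (fun a => a < i₀), U i₀ a * v a t from rfl]
      rw [Finset.sum_eq_single k]
      · intro b hb hbk
        rw [honly b (Finset.mem_filter.mp hb).2 hbk, zero_mul]
      · intro hk'
        exact absurd hki (by simpa using hk')
    have hvks : v k s = 0 := hks s hsr
    have hwr2 : 2 * w r = U i₀ k * v k r := by
      have e1 := hstar0 r s (fun hh => hsr hh.symm)
      rw [hdr, hdt s, hvks, mul_zero, zero_mul, add_zero] at e1
      have key : (2 * w r - U i₀ k * v k r) * w s = 0 := by linear_combination e1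
      have := (mul_eq_zero.mp key).resolve_right hws
      linear_combination this
    set β : F := U i₀ k / 2 with hβ
    set U' : Matrix (Fin n) (Fin n) F := fun a b =>
      if a = i₀ ∧ b = k then U i₀ k - 2 * β
      else if i₀ < a ∧ b = k then U a k + β * U a i₀
      else U a b with hU'
    have hU'entry : ∀ a b, U' a b =
        if a = i₀ ∧ b = k then U i₀ k - 2 * β
        else if i₀ < a ∧ b = k then U a k + β * U a i₀
        else U a b := fun a b => rfl
    have h2β : U i₀ k - 2 * β = 0 := by
      rw [hβ]; field_simp; ring
    have hi₀k : i₀ ≠ k := fun hh => absurd hki (by rw [hh]; exact lt_irrefl k)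
    have hrow0' : ∀ l, U' i₀ l = 0 := by
      intro l
      rw [hU'entry]
      by_cases hlk : l = k
      · rw [if_pos ⟨rfl, hlk⟩]; exact h2β
      · rw [if_neg (fun hh => hlk hh.2), if_neg (fun hh => absurd hh.1 (lt_irrefl i₀))]
        by_cases hl : l < i₀
        · exact honly l hl hlk
        · exact hU i₀ l (not_lt.mp hl)
    have hQ : ETOQ U U' := by
      refine ⟨k, i₀, β, hki, ?_, ?_, fun a b => hU'entry a b⟩
      · intro j hj
        by_cases hji : j < i₀
        · exact honly j hji (fun hh => absurd hj (by rw [hh]; exact lt_irrefl k))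
        · exact hU i₀ j (not_lt.mp hji)
      · by_cases hk0 : k.val = 0
        · exact Or.inl hk0
        · refine Or.inr ⟨Nat.pos_of_ne_zero hk0, ?_⟩
          intro i hik
          rw [hrow0 k hki i, honly i (hik.trans hki) (ne_of_lt hik)]
          ring
    have hU'slt : SLT U' := by
      intro a b hab
      rw [hU'entry]
      by_cases hc1 : a = i₀ ∧ b = k
      · exfalso
        rw [hc1.1, hc1.2] at hab
        exact absurd hab (not_le.mpr hki)
      · rw [if_neg hc1]
        by_cases hc2 : i₀ < a ∧ b = k
        · rw [if_pos hc2, hU a k (hc2.2 ▸ hab), hU a i₀ (le_of_lt (lt_of_le_of_lt (hc2.2 ▸ hab) hki))]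
          ring
        · rw [if_neg hc2]
          exact hU a b hab
    -- the new witness
    set v' : Fin n → Fin n → F := fun i => if i = i₀ then (fun t => w t - β * v k t) else v i
      with hv'
    have hv'i₀ : ∀ t, v' i₀ t = w t - β * v k t := fun t => by
      rw [show v' i₀ = (fun t => w t - β * v k t) from if_pos rfl]
    have hv'ne : ∀ i, i ≠ i₀ → v' i = v i := fun i hi => if_neg hi
    have hv'r0 : v' i₀ r = 0 := by
      rw [hv'i₀, hβ]
      rw [sub_eq_zero, div_mul_eq_mul_div, eq_div_iff h2]
      linear_combination hwr2
    have hv'other : ∀ t, t ≠ r → v' i₀ t = w t := by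
      intro t ht
      rw [hv'i₀, hks t ht, mul_zero, sub_zero]
    have hind' : ∀ c : Fin n → F, ∑ i, c i • v' i = 0 → ∀ i, c i = 0 := by
      intro c hc
      have hsum : ∑ a, (c a + (if a = k then -(c i₀ * β) else 0)) • v a = 0 := by
        funext t
        have h0 := congrFun hc t
        simp only [Finset.sum_apply, Pi.smul_apply, smul_eq_mul, Pi.zero_apply] at h0 ⊢
        have lhs_eq : ∑ a, (c a + (if a = k then -(c i₀ * β) else 0)) * v a t
            = (∑ a, c a * v a t) + -(c i₀ * β * v k t) := by
          have he : ∀ a ∈ Finset.univ, (c a + (if a = k then -(c i₀ * β) else 0)) * v a t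
              = c a * v a t + (if a = k then -(c i₀ * β) * v a t else 0) := by
            intro a _
            by_cases hak : a = k
            · rw [if_pos hak, if_pos hak]; ring
            · rw [if_neg hak, if_neg hak]; ring
          rw [Finset.sum_congr rfl he, Finset.sum_add_distrib,
            Finset.sum_ite_eq' Finset.univ k (fun a => -(c i₀ * β) * v a t)]
          simp only [Finset.mem_univ, if_true]
          ring
        have rhs_eq : ∑ a, c a * v' a t
            = (∑ a, c a * v a t) + -(c i₀ * β * v k t) := by
          have he : ∀ a ∈ Finset.univ, c a * v' a t
              = c a * v a t + (if a = i₀ then -(c i₀ * β * v k t) else 0) := by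
            intro a _
            by_cases hai : a = i₀
            · rw [if_pos hai, hai, hv'i₀, hw]; ring
            · rw [if_neg hai, hv'ne a hai]; ring
          rw [Finset.sum_congr rfl he, Finset.sum_add_distrib,
            Finset.sum_ite_eq' Finset.univ i₀ (fun _ => -(c i₀ * β * v k t))]
          simp only [Finset.mem_univ, if_true]
        rw [lhs_eq, ← rhs_eq]
        exact h0
      have hz : ∀ a, c a + (if a = k then -(c i₀ * β) else 0) = 0 := hind _ hsum
      have hci₀ : c i₀ = 0 := by
        have := hz i₀
        simpa [hi₀k] using this
      intro i
      by_cases hik : i = k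
      · have := hz i
        rw [if_pos hik, hci₀] at this
        simpa using this
      · have := hz i
        simpa [hik] using this
    have hstar' : ∀ i r' s' : Fin n, r' ≠ s' → 2 * v' i r' * v' i s' =
        ∑ j ∈ Finset.univ.filter (fun j => j < i),
          U' i j * (v' j r' * v' i s' + v' j s' * v' i r') := by
      intro i r' s' hrs'
      by_cases hii : i = i₀
      · subst hii
        have hRHS : ∑ j ∈ Finset.univ.filter (fun j => j < i₀),
            U' i₀ j * (v' j r' * v' i₀ s' + v' j s' * v' i₀ r') = 0 :=
          Finset.sum_eq_zero fun j _ => by rw [hrow0' j, zero_mul]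
        rw [hRHS, mul_assoc]
        have hprod : v' i₀ r' * v' i₀ s' = 0 := by
          by_cases h1 : r' = r
          · rw [h1, hv'r0, zero_mul]
          · by_cases h1' : s' = r
            · rw [h1', hv'r0, mul_zero]
            · rw [hv'other r' h1, hv'other s' h1']
              by_cases h3 : r' = s
              · have : s' ≠ s := fun hh => hrs' (by rw [h3, hh])
                rw [hsupp s' h1' this, mul_zero]
              · rw [hsupp r' h1 h3, zero_mul]
        rw [hprod, mul_zero]
      · have hvi : v' i = v i := hv'ne i hii
        by_cases hlt : i < i₀
        · rw [hvi]
          have : ∀ j ∈ Finset.univ.filter (fun j => j < i),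
              U' i j * (v' j r' * v i s' + v' j s' * v i r')
              = U i j * (v j r' * v i s' + v j s' * v i r') := by
            intro j hj
            have hji : j < i₀ := lt_trans (Finset.mem_filter.mp hj).2 hlt
            have hjni : j ≠ i₀ := ne_of_lt hji
            have hjk' : U' i j = U i j := by
              rw [hU'entry, if_neg (fun hh => hii hh.1),
                if_neg (fun hh => absurd hlt (not_lt.mpr (le_of_lt hh.1)))]
            rw [hjk', hv'ne j hjni]
          rw [Finset.sum_congr rfl this]
          exact hstar i r' s' hrs'
        · have hgt : i₀ < i := lt_of_le_of_ne (not_lt.mp hlt) (fun hh => hii hh.symm)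
          rw [hvi]
          set A : F := β * U i i₀ * (v k r' * v i s' + v k s' * v i r') with hA
          have hterm : ∀ j ∈ Finset.univ.filter (fun j => j < i),
              U' i j * (v' j r' * v i s' + v' j s' * v i r')
              = U i j * (v j r' * v i s' + v j s' * v i r')
                + (if j = k then A else 0) + (if j = i₀ then -A else 0) := by
            intro j hj
            by_cases hjk : j = k
            · have hjni : j ≠ i₀ := by rw [hjk]; exact ne_of_lt hki
              have hU'j : U' i j = U i j + β * U i i₀ := by
                rw [hU'entry, if_neg (fun hh => hii hh.1), if_pos ⟨hgt, hjk⟩, hjk]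
              rw [hU'j, hv'ne j hjni, if_pos hjk, if_neg hjni, hA, hjk]
              ring
            · by_cases hji : j = i₀
              · have hU'j : U' i j = U i j := by
                  rw [hU'entry, if_neg (fun hh => hii hh.1),
                    if_neg (fun hh => hi₀k (hji.symm.trans hh.2))]
                rw [hU'j, if_neg hjk, if_pos hji, hji, hv'i₀ r', hv'i₀ s', hA, hw]
                ring
              · have hU'j : U' i j = U i j := by
                  rw [hU'entry, if_neg (fun hh => hii hh.1), if_neg (fun hh => hjk hh.2)]
                rw [hU'j, hv'ne j hji, if_neg hjk, if_neg hji]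
                ring
          have hkmem : k ∈ Finset.univ.filter (fun j => j < i) :=
            Finset.mem_filter.mpr ⟨Finset.mem_univ k, lt_trans hki hgt⟩
          have hi₀mem' : i₀ ∈ Finset.univ.filter (fun j => j < i) :=
            Finset.mem_filter.mpr ⟨Finset.mem_univ i₀, hgt⟩
          rw [Finset.sum_congr rfl hterm, Finset.sum_add_distrib, Finset.sum_add_distrib,
            Finset.sum_ite_eq' (Finset.univ.filter (fun j => j < i)) k (fun _ => A),
            Finset.sum_ite_eq' (Finset.univ.filter (fun j => j < i)) i₀ (fun _ => -A),
            if_pos hkmem, if_pos hi₀mem', hstar i r' s' hrs']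
          ring
    -- the measure decreases
    have hsubset : Finset.univ.filter (fun i => ∃ l, U' i l ≠ 0) ⊆ Sf := by
      intro a ha
      obtain ⟨l, hal⟩ := (Finset.mem_filter.mp ha).2
      have hai : a ≠ i₀ := by
        intro hh
        subst hh
        exact hal (hrow0' l)
      apply Finset.mem_filter.mpr
      refine ⟨Finset.mem_univ a, ?_⟩
      by_cases hc : i₀ < a ∧ l = k
      · have hval : U' a l = U a k + β * U a i₀ := by
          rw [hU'entry, if_neg (fun hh => hai hh.1), if_pos hc]
        by_contra hno
        push_neg at hno
        rw [hval, hno k, hno i₀] at hal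
        simp at hal
      · have hval : U' a l = U a l := by
          rw [hU'entry, if_neg (fun hh => hai hh.1), if_neg hc]
        exact ⟨l, hval ▸ hal⟩
    have hnotmem : i₀ ∉ Finset.univ.filter (fun i => ∃ l, U' i l ≠ 0) := by
      simp only [Finset.mem_filter, Finset.mem_univ, true_and, not_exists]
      intro l
      simp only [ne_eq, not_not]
      exact hrow0' l
    have hss : Finset.univ.filter (fun i => ∃ l, U' i l ≠ 0) ⊂ Sf :=
      (Finset.ssubset_iff_of_subset hsubset).mpr ⟨i₀, hi₀mem, hnotmem⟩
    have hcard' : (Finset.univ.filter (fun i => ∃ l, U' i l ≠ 0)).card ≤ m := by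
      have := Finset.card_lt_card hss
      omega
    exact Relation.ReflTransGen.head hQ (ih U' hU'slt ⟨v', hind', hstar'⟩ hcard')


/-- If `A(U) ≅ A(0ₙ)` via a degree-preserving isomorphism, then `U` can be transformed into
the zero matrix by a finite sequence of well-defined elementary operations of type `Q`. -/
theorem stmt19 {n : ℕ} (h2 : (2 : F) ≠ 0) (U : Matrix (Fin n) (Fin n) F) (hU : SLT U)
    (hiso : NTIso U (0 : Matrix (Fin n) (Fin n) F)) :
    Relation.ReflTransGen (fun A B : Matrix (Fin n) (Fin n) F => ETOQ A B)
      U (0 : Matrix (Fin n) (Fin n) F) := by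
  exact wit_reduce h2 _ U hU (wit_of_iso U hiso) le_rfl
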